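/- arXiv:math/9802046 — 2 statements merged into one kernel-verified Lean document; each statement's English description precedes it below -/
import Mathlib

section
/- If m is a frugal positive integer (h(m) > 0), then for every positive integer n, h(m·n) ≥ h(n). -/
/-- Number of digits of `n` in base `B`. -/
def dig (B n : ℕ) : ℕ := (Nat.digits B n).length

/-- Number of digits needed to write the prime power factorisation of `n` in base `B`. -/
def phi (B n : ℕ) : ℕ :=
  ∑ p ∈ n.factorization.support,
    (dig B p + if n.factorization p = 1 then 0 else dig B (n.factorization p))

/-- `h B n = δ(n) - φ(n)` as an integer. -/
def hEcon (B n : ℕ) : ℤ := (dig B n : ℤ) - (phi B n : ℤ)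

lemma dig_mono (B : ℕ) {x y : ℕ} (h : x ≤ y) : dig B x ≤ dig B y :=
  Nat.le_digits_len_le B x y h

lemma dig_eq (B : ℕ) (hB : 2 ≤ B) {x : ℕ} (hx : x ≠ 0) :
    dig B x = Nat.log B x + 1 := Nat.digits_len B x hB hx

lemma dig_mul_le (B : ℕ) (hB : 2 ≤ B) {x y : ℕ} (hx : x ≠ 0) (hy : y ≠ 0) :
    dig B (x * y) ≤ dig B x + dig B y := by
  rw [dig_eq B hB hx, dig_eq B hB hy, dig_eq B hB (Nat.mul_ne_zero hx hy)]
  have h : Nat.log B (x * y) ≤ Nat.log B x + Nat.log B y + 1 := by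
    have := Nat.log_lt_of_lt_pow (b := B) (Nat.mul_ne_zero hx hy)
      (x := Nat.log B x + Nat.log B y + 2) ?_
    · omega
    · calc x * y < B ^ (Nat.log B x + 1) * B ^ (Nat.log B y + 1) :=
            Nat.mul_lt_mul'' (Nat.lt_pow_succ_log_self hB x) (Nat.lt_pow_succ_log_self hB y)
        _ = B ^ (Nat.log B x + Nat.log B y + 2) := by ring
  omega

lemma dig_mul_ge (B : ℕ) (hB : 2 ≤ B) {x y : ℕ} (hx : x ≠ 0) (hy : y ≠ 0) :
    dig B x + dig B y ≤ dig B (x * y) + 1 := by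
  rw [dig_eq B hB hx, dig_eq B hB hy, dig_eq B hB (Nat.mul_ne_zero hx hy)]
  have h : Nat.log B x + Nat.log B y ≤ Nat.log B (x * y) := by
    apply Nat.le_log_of_pow_le hB
    rw [pow_add]
    exact Nat.mul_le_mul (Nat.pow_log_le_self B hx) (Nat.pow_log_le_self B hy)
  omega

lemma phi_mul_le (B : ℕ) (hB : 2 ≤ B) {x y : ℕ} (hx : x ≠ 0) (hy : y ≠ 0) :
    phi B (x * y) ≤ phi B x + phi B y := by
  classical
  have hfac : (x * y).factorization = x.factorization + y.factorization :=
    Nat.factorization_mul hx hy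
  set S := (x * y).factorization.support with hS
  have hsub : x.factorization.support ⊆ S := by
    rw [hS, hfac]; intro p hp
    simp only [Finsupp.mem_support_iff, Finsupp.add_apply] at hp ⊢
    omega
  have hsub' : y.factorization.support ⊆ S := by
    rw [hS, hfac]; intro p hp
    simp only [Finsupp.mem_support_iff, Finsupp.add_apply] at hp ⊢
    omega
  have hx' : phi B x = ∑ p ∈ S, (if x.factorization p = 0 then 0 else
      dig B p + if x.factorization p = 1 then 0 else dig B (x.factorization p)) := by
    have e1 : ∀ p ∈ x.factorization.support,
        (dig B p + if x.factorization p = 1 then 0 else dig B (x.factorization p)) =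
        (if x.factorization p = 0 then 0 else
          dig B p + if x.factorization p = 1 then 0 else dig B (x.factorization p)) :=
      fun p hp => (if_neg (Finsupp.mem_support_iff.mp hp)).symm
    rw [phi, Finset.sum_congr rfl e1]
    exact Finset.sum_subset hsub (fun p _ hp => by
      rw [if_pos (Finsupp.notMem_support_iff.mp hp)])
  have hy' : phi B y = ∑ p ∈ S, (if y.factorization p = 0 then 0 else
      dig B p + if y.factorization p = 1 then 0 else dig B (y.factorization p)) := by
    have e1 : ∀ p ∈ y.factorization.support,
        (dig B p + if y.factorization p = 1 then 0 else dig B (y.factorization p)) =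
        (if y.factorization p = 0 then 0 else
          dig B p + if y.factorization p = 1 then 0 else dig B (y.factorization p)) :=
      fun p hp => (if_neg (Finsupp.mem_support_iff.mp hp)).symm
    rw [phi, Finset.sum_congr rfl e1]
    exact Finset.sum_subset hsub' (fun p _ hp => by
      rw [if_pos (Finsupp.notMem_support_iff.mp hp)])
  rw [phi, hx', hy', ← Finset.sum_add_distrib]
  apply Finset.sum_le_sum
  intro p hp
  have hpprime : p.Prime := Nat.prime_of_mem_primeFactors hp
  have hp2 : 2 ≤ p := hpprime.two_le
  set a := x.factorization p with ha
  set b := y.factorization p with hb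
  have hab : (x * y).factorization p = a + b := by rw [hfac]; rfl
  rw [hab]
  have habne : a + b ≠ 0 := by
    have := Finsupp.mem_support_iff.mp hp
    rw [hab] at this; exact this
  by_cases h0a : a = 0
  · have hb0 : b ≠ 0 := by omega
    simp [h0a, hb0]
  by_cases h0b : b = 0
  · simp [h0b, h0a]
  rw [if_neg h0a, if_neg h0b]
  -- goal: dig B p + δ'(a+b) ≤ (dig B p + δ' a) + (dig B p + δ' b)
  have key : (if a + b = 1 then 0 else dig B (a + b)) ≤
      dig B p + (if a = 1 then 0 else dig B a) + (if b = 1 then 0 else dig B b) := by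
    have hab1 : a + b ≠ 1 := by omega
    rw [if_neg hab1]
    by_cases ha1 : a = 1
    · by_cases hb1 : b = 1
      · rw [if_pos ha1, if_pos hb1, ha1, hb1]
        simpa using dig_mono B hp2
      · rw [if_pos ha1, if_neg hb1, ha1]
        calc dig B (1 + b) ≤ dig B (p * b) := by
              apply dig_mono; nlinarith [Nat.one_le_iff_ne_zero.mpr h0b]
          _ ≤ dig B p + dig B b := dig_mul_le B hB (by omega) h0b
          _ ≤ _ := by omega
    · by_cases hb1 : b = 1
      · rw [if_neg ha1, if_pos hb1, hb1]
        calc dig B (a + 1) ≤ dig B (p * a) := by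
              apply dig_mono; nlinarith [Nat.one_le_iff_ne_zero.mpr h0a]
          _ ≤ dig B p + dig B a := dig_mul_le B hB (by omega) h0a
          _ ≤ _ := by omega
      · rw [if_neg ha1, if_neg hb1]
        calc dig B (a + b) ≤ dig B (a * b) := by
              apply dig_mono; nlinarith [Nat.one_le_iff_ne_zero.mpr h0a,
                Nat.one_le_iff_ne_zero.mpr h0b, (by omega : 2 ≤ a), (by omega : 2 ≤ b)]
          _ ≤ dig B a + dig B b := dig_mul_le B hB h0a h0b
          _ ≤ _ := by omega
  omega

theorem statement_9 (B : ℕ) (hB : 2 ≤ B) (m n : ℕ) (hm : 0 < m) (hn : 0 < n)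
    (hfrugal : 0 < hEcon B m) :
    hEcon B n ≤ hEcon B (m * n) := by
  have h1 := dig_mul_ge B hB hm.ne' hn.ne'
  have h2 := phi_mul_le B hB hm.ne' hn.ne'
  unfold hEcon at *
  omega
end

section
/- Assume Dickson's conjecture: for every finite family of linear forms f_i(x) = a_i·x + b_i (i = 1,…,t) with positive integer coefficients a_i and nonnegative integer constants b_i, if there is no integer m > 1 dividing the product f_1(n)·f_2(n)⋯f_t(n) for every natural number n, then there are infinitely many natural numbers n for which all the values f_1(n), …, f_t(n) are simultaneously prime. Then for every base B ≥ 2 and every t ≥ 1, there exists a positive integer N such that all of N, N+1, …, N+t−1 are economical (h(N+j) ≥ 0 for 0 ≤ j ≤ t−1). -/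
lemma dig_eq_log {B n : ℕ} (hB : 1 < B) (hn : n ≠ 0) : dig B n = Nat.log B n + 1 :=
  Nat.digits_len B n hB hn

lemma dig_mono_s16 {B m n : ℕ} (hB : 1 < B) (hm : m ≠ 0) (h : m ≤ n) : dig B m ≤ dig B n := by
  rw [dig_eq_log hB hm, dig_eq_log hB (by omega)]
  exact Nat.add_le_add_right (Nat.log_mono_right h) 1

lemma phi_mul_coprime {B c d : ℕ} (hc : c ≠ 0) (hd : d ≠ 0) (h : Nat.Coprime c d) :
    phi B (c * d) = phi B c + phi B d := by
  have hdisj : Disjoint c.factorization.support d.factorization.support := by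
    simpa [Nat.support_factorization] using h.disjoint_primeFactors
  unfold phi
  rw [Nat.factorization_mul hc hd, Finsupp.support_add_eq hdisj, Finset.sum_union hdisj]
  congr 1
  · refine Finset.sum_congr rfl fun p hp => ?_
    have h0 : d.factorization p = 0 :=
      Finsupp.notMem_support_iff.mp (Finset.disjoint_left.mp hdisj hp)
    simp [Finsupp.add_apply, h0]
  · refine Finset.sum_congr rfl fun p hp => ?_
    have h0 : c.factorization p = 0 :=
      Finsupp.notMem_support_iff.mp (Finset.disjoint_right.mp hdisj hp)
    simp [Finsupp.add_apply, h0]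

lemma phi_prime {B p : ℕ} (hp : p.Prime) : phi B p = dig B p := by
  unfold phi
  rw [hp.factorization]
  rw [Finsupp.support_single_ne_zero _ one_ne_zero]
  simp

lemma phi_prime_pow {B p A : ℕ} (hp : p.Prime) (hA : A ≠ 0) :
    phi B (p ^ A) ≤ dig B p + dig B A := by
  unfold phi
  rw [hp.factorization_pow, Finsupp.support_single_ne_zero _ hA]
  simp only [Finset.sum_singleton, Finsupp.single_eq_same]
  split <;> omega

lemma phi_le {B n : ℕ} (hB : 1 < B) (hn : n ≠ 0) : phi B n ≤ (n + 1) * (2 * dig B n) := by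
  unfold phi
  calc ∑ p ∈ n.factorization.support,
      (dig B p + if n.factorization p = 1 then 0 else dig B (n.factorization p))
      ≤ ∑ _p ∈ n.factorization.support, 2 * dig B n := by
        refine Finset.sum_le_sum fun p hp => ?_
        rw [Nat.support_factorization] at hp
        have hpp := Nat.prime_of_mem_primeFactors hp
        have hpd : p ∣ n := Nat.dvd_of_mem_primeFactors hp
        have hple : p ≤ n := Nat.le_of_dvd (Nat.pos_of_ne_zero hn) hpd
        have h1 : dig B p ≤ dig B n := dig_mono_s16 hB hpp.ne_zero hple
        have h2 : (if n.factorization p = 1 then 0 else dig B (n.factorization p)) ≤ dig B n := by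
          split
          · omega
          · have he : n.factorization p ≠ 0 := by
              rw [← Finsupp.mem_support_iff, Nat.support_factorization]; exact hp
            have helt : n.factorization p < n := Nat.factorization_lt p hn
            exact dig_mono_s16 hB he helt.le
        omega
    _ = n.factorization.support.card * (2 * dig B n) := by
        rw [Finset.sum_const, smul_eq_mul]
    _ ≤ (n + 1) * (2 * dig B n) := by
        have : n.factorization.support.card ≤ n + 1 := by
          have : n.factorization.support ⊆ Finset.range (n + 1) := by
            intro p hp
            rw [Nat.support_factorization] at hp
            have := Nat.le_of_dvd (Nat.pos_of_ne_zero hn) (Nat.dvd_of_mem_primeFactors hp)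
            simp [Finset.mem_range]; omega
          simpa using Finset.card_le_card this
        exact Nat.mul_le_mul_right _ this

theorem statement_16
    (HDickson : ∀ (t : ℕ) (a b : Fin t → ℕ), (∀ i, 0 < a i) →
      (¬ ∃ m : ℕ, 1 < m ∧ ∀ n : ℕ, m ∣ ∏ i, (a i * n + b i)) →
      {n : ℕ | ∀ i, Nat.Prime (a i * n + b i)}.Infinite)
    (B : ℕ) (hB : 2 ≤ B) (t : ℕ) (ht : 1 ≤ t) :
    ∃ N : ℕ, 0 < N ∧ ∀ j < t, 0 ≤ hEcon B (N + j) := by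
  classical
  have hB1 : 1 < B := hB
  have hqinf : {p | Nat.Prime p}.Infinite := Nat.infinite_setOf_prime
  set q : Fin t → ℕ := fun i => Nat.nth Nat.Prime (B + t + (i : ℕ)) with hqdef
  have hqprime : ∀ i, (q i).Prime := fun i => Nat.prime_nth_prime _
  have hqge : ∀ i : Fin t, B + t + (i : ℕ) ≤ q i :=
    fun i => (Nat.nth_strictMono hqinf).le_apply
  have hqinj : ∀ i j : Fin t, q i = q j → i = j := by
    intro i j h
    have := (Nat.nth_strictMono hqinf).injective h
    ext; omega
  set Q : ℕ := Nat.nth Nat.Prime (B + 2 * t) with hQdef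
  have hqleQ : ∀ i : Fin t, q i ≤ Q := by
    intro i
    have hi := i.isLt
    exact (Nat.nth_le_nth hqinf).mpr (by omega)
  set K0 : ℕ := (t + 1) * (2 * dig B t) + dig B Q with hK0
  set m : ℕ := K0 + 2 with hm
  set A : ℕ := B ^ m with hA
  have hA0 : A ≠ 0 := by positivity
  have hdigA : dig B A = m + 1 := by rw [dig_eq_log hB1 hA0, hA, Nat.log_pow hB1]
  have hKA : K0 + (m + 1) ≤ A := by
    have h2m : 2 ^ m ≤ A := by rw [hA]; exact Nat.pow_le_pow_left hB m
    have hK2 : K0 < 2 ^ K0 := Nat.lt_two_pow_self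
    have h4 : 2 ^ m = 4 * 2 ^ K0 := by rw [hm, pow_add]; ring
    omega
  have hdigt : 1 ≤ dig B t := by rw [dig_eq_log hB1 (by omega)]; omega
  have htK0 : t ≤ K0 := by
    have : (t + 1) * 2 ≤ (t + 1) * (2 * dig B t) := Nat.mul_le_mul_left _ (by omega)
    omega
  have htA : t ≤ A := by omega
  -- small primes
  set SP : Finset ℕ := (Finset.range (t + 1)).filter Nat.Prime with hSP
  have hSPprime : ∀ ℓ ∈ SP, ℓ.Prime := fun ℓ h => (Finset.mem_filter.mp h).2
  have hSPle : ∀ ℓ ∈ SP, ℓ ≤ t := by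
    intro ℓ h
    have := Finset.mem_range.mp (Finset.mem_filter.mp h).1
    omega
  have hSPmem : ∀ p : ℕ, p.Prime → p ≤ t → p ∈ SP := fun p hp hle =>
    Finset.mem_filter.mpr ⟨Finset.mem_range.mpr (by omega), hp⟩
  set M : ℕ := ∏ ℓ ∈ SP, ℓ ^ A with hM
  have hM0 : M ≠ 0 :=
    Finset.prod_ne_zero_iff.mpr fun ℓ h => pow_ne_zero _ (hSPprime ℓ h).pos.ne'
  have hMdvd : ∀ ℓ ∈ SP, ℓ ^ A ∣ M := fun ℓ h => Finset.dvd_prod_of_mem _ h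
  have hjM : ∀ j : ℕ, j ≠ 0 → j ≤ t → j ∣ M := by
    intro j hj0 hjt
    rw [← Nat.factorization_le_iff_dvd hj0 hM0, Finsupp.le_iff]
    intro p hp
    rw [Nat.support_factorization] at hp
    have hpp : p.Prime := Nat.prime_of_mem_primeFactors hp
    have hpd : p ∣ j := Nat.dvd_of_mem_primeFactors hp
    have hpt : p ≤ t := le_trans (Nat.le_of_dvd (by omega) hpd) hjt
    have hjp : j.factorization p ≤ A := le_trans (Nat.factorization_lt p hj0).le (by omega)
    have hMp : M.factorization p = A := by
      rw [hM, Nat.factorization_prod (fun ℓ h => pow_ne_zero A (hSPprime ℓ h).pos.ne')]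
      rw [Finset.sum_apply']
      have : ∀ ℓ ∈ SP, (ℓ ^ A).factorization p = if ℓ = p then A else 0 := by
        intro ℓ h
        rw [(hSPprime ℓ h).factorization_pow, Finsupp.single_apply]
      rw [Finset.sum_congr rfl this, Finset.sum_ite_eq' SP p (fun _ => A)]
      simp [hSPmem p hpp hpt]
    omega
  set Qprod : ℕ := ∏ i : Fin t, q i ^ (A + 1) with hQprod
  have hQprod0 : Qprod ≠ 0 :=
    Finset.prod_ne_zero_iff.mpr fun i _ => pow_ne_zero _ (hqprime i).pos.ne'
  set C : ℕ := M * Qprod with hC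
  have hC0 : C ≠ 0 := mul_ne_zero hM0 hQprod0
  have hCpos : 0 < C := Nat.pos_of_ne_zero hC0
  have hqQprod : ∀ i : Fin t, q i ^ (A + 1) ∣ Qprod :=
    fun i => Finset.dvd_prod_of_mem _ (Finset.mem_univ i)
  have hMC : M ∣ C := dvd_mul_right M Qprod
  -- CRT
  set sF : Option (Fin t) → ℕ := fun o => o.elim M (fun i => q i ^ (A + 1)) with hsF
  set aF : Option (Fin t) → ℕ := fun o => o.elim 0 (fun i => q i ^ A - ((i : ℕ) + 1)) with haF
  set l : List (Option (Fin t)) := none :: (List.ofFn fun i : Fin t => some i) with hl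
  have hcopr : l.Pairwise (Function.onFun Nat.Coprime sF) := by
    rw [hl, List.pairwise_cons]
    constructor
    · intro o ho
      rw [List.mem_ofFn] at ho
      obtain ⟨i, rfl⟩ := ho
      show Nat.Coprime M (q i ^ (A + 1))
      apply Nat.Coprime.pow_right
      apply Nat.Coprime.prod_left
      intro ℓ hℓ
      refine Nat.Coprime.pow_left _ ?_
      refine (Nat.coprime_primes (hSPprime ℓ hℓ) (hqprime i)).mpr ?_
      have h1 := hSPle ℓ hℓ
      have h2 := hqge i
      omega
    · rw [List.pairwise_ofFn]
      intro i j hij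
      show Nat.Coprime (q i ^ (A + 1)) (q j ^ (A + 1))
      refine Nat.Coprime.pow _ _ ?_
      refine (Nat.coprime_primes (hqprime i) (hqprime j)).mpr ?_
      intro h
      exact absurd (hqinj i j h) (by intro h'; subst h'; exact lt_irrefl _ hij)
  obtain ⟨r, hr⟩ := Nat.chineseRemainderOfList aF sF l hcopr
  have hrM : M ∣ r := by
    have := hr none (by simp [hl])
    simpa [hsF, haF, Nat.modEq_zero_iff_dvd] using this
  have hrq : ∀ i : Fin t, r ≡ q i ^ A - ((i : ℕ) + 1) [MOD q i ^ (A + 1)] := by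
    intro i
    have : some i ∈ l := by simp [hl, List.mem_ofFn]
    simpa [hsF, haF] using hr (some i) this
  have hiq : ∀ i : Fin t, (i : ℕ) + 1 ≤ q i ^ A := by
    intro i
    have h1 : (i : ℕ) + 1 ≤ q i := by have := hqge i; have := i.isLt; omega
    exact le_trans h1 (Nat.le_self_pow hA0 _)
  have hrq' : ∀ i : Fin t, (r + ((i : ℕ) + 1)) % q i ^ (A + 1) = q i ^ A := by
    intro i
    have h1 := (hrq i).add_right ((i : ℕ) + 1)
    rw [Nat.sub_add_cancel (hiq i)] at h1
    have h2 : q i ^ A % q i ^ (A + 1) = q i ^ A :=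
      Nat.mod_eq_of_lt (Nat.pow_lt_pow_right (hqprime i).one_lt (by omega))
    have h3 := h1.symm
    unfold Nat.ModEq at h3
    omega
  have hqAr : ∀ i : Fin t, q i ^ A ∣ r + ((i : ℕ) + 1) := by
    intro i
    have hdm := Nat.div_add_mod (r + ((i : ℕ) + 1)) (q i ^ (A + 1))
    rw [hrq' i] at hdm
    have h1 : q i ^ A ∣ q i ^ (A + 1) * ((r + ((i : ℕ) + 1)) / q i ^ (A + 1)) :=
      Dvd.dvd.mul_right (pow_dvd_pow _ (by omega)) _
    exact hdm ▸ dvd_add h1 dvd_rfl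
  have hnq : ∀ i : Fin t, ¬ q i ^ (A + 1) ∣ r + ((i : ℕ) + 1) := by
    intro i hdvd
    rw [Nat.dvd_iff_mod_eq_zero] at hdvd
    rw [hrq' i] at hdvd
    exact pow_ne_zero A (hqprime i).pos.ne' hdvd
  -- the linear forms
  set c : Fin t → ℕ := fun i => ((i : ℕ) + 1) * q i ^ A with hcdef
  have hc0 : ∀ i, c i ≠ 0 :=
    fun i => mul_ne_zero (by omega) (pow_ne_zero _ (hqprime i).pos.ne')
  have hciC : ∀ i, c i ∣ C := by
    intro i
    refine mul_dvd_mul (hjM _ (by omega) (by have := i.isLt; omega)) ?_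
    exact dvd_trans (pow_dvd_pow _ (by omega)) (hqQprod i)
  have hcoiq : ∀ i : Fin t, Nat.Coprime ((i : ℕ) + 1) (q i ^ A) := by
    intro i
    apply Nat.Coprime.pow_right
    have hnd : ¬ q i ∣ (i : ℕ) + 1 := by
      intro hd
      have := Nat.le_of_dvd (by omega) hd
      have := hqge i
      have := i.isLt
      omega
    exact (Nat.Prime.coprime_iff_not_dvd (hqprime i)).mpr hnd |>.symm
  have hcir : ∀ i, c i ∣ r + ((i : ℕ) + 1) := by
    intro i
    refine Nat.Coprime.mul_dvd_of_dvd_of_dvd (hcoiq i) ?_ (hqAr i)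
    exact dvd_add ((hjM _ (by omega) (by have := i.isLt; omega)).trans hrM) dvd_rfl
  set a' : Fin t → ℕ := fun i => C / c i with ha'def
  set b' : Fin t → ℕ := fun i => (r + ((i : ℕ) + 1)) / c i with hb'def
  have hkey : ∀ (i : Fin t) (n : ℕ), c i * (a' i * n + b' i) = C * n + (r + ((i : ℕ) + 1)) := by
    intro i n
    rw [mul_add, ← mul_assoc, Nat.mul_div_cancel' (hciC i), Nat.mul_div_cancel' (hcir i)]
  have ha'pos : ∀ i, 0 < a' i :=
    fun i => Nat.div_pos (Nat.le_of_dvd hCpos (hciC i)) (Nat.pos_of_ne_zero (hc0 i))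
  -- Dickson hypothesis
  have hhyp : ¬ ∃ m0 : ℕ, 1 < m0 ∧ ∀ n : ℕ, m0 ∣ ∏ i, (a' i * n + b' i) := by
    rintro ⟨m0, hm1, hmdvd⟩
    set p : ℕ := m0.minFac with hpdef
    have pp : p.Prime := Nat.minFac_prime (by omega)
    have hpdvd : ∀ n : ℕ, p ∣ ∏ i, (a' i * n + b' i) :=
      fun n => (m0.minFac_dvd).trans (hmdvd n)
    have key_dvd : ∀ (n : ℕ) (i : Fin t), p ∣ a' i * n + b' i →
        p ∣ C * n + (r + ((i : ℕ) + 1)) := by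
      intro n i h
      rw [← hkey i n]
      exact Dvd.dvd.mul_left h (c i)
    by_cases hpC : p ∣ C
    · rw [hC] at hpC
      rcases (Nat.Prime.dvd_mul pp).mp hpC with hpM | hpQ
      · -- p is a small prime
        have hpt : p ≤ t := by
          obtain ⟨ℓ, hℓ, hdvd⟩ := (pp.prime.dvd_finset_prod_iff _).mp hpM
          have heq : p = ℓ :=
            (Nat.prime_dvd_prime_iff_eq pp (hSPprime ℓ hℓ)).mp (pp.dvd_of_dvd_pow hdvd)
          exact heq ▸ hSPle ℓ hℓ
        obtain ⟨i, -, hpi⟩ := (pp.prime.dvd_finset_prod_iff _).mp (hpdvd 0)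
        set e : ℕ := ((i : ℕ) + 1).factorization p with hedef
        have h1 : p ^ (e + 1) ∣ C * 0 + (r + ((i : ℕ) + 1)) := by
          rw [← hkey i 0]
          have hpe : p ^ e ∣ (i : ℕ) + 1 := Nat.ordProj_dvd _ _
          calc p ^ (e + 1) = p ^ e * p := by rw [pow_succ]
            _ ∣ (((i : ℕ) + 1) * (a' i * 0 + b' i)) := mul_dvd_mul hpe hpi
            _ ∣ c i * (a' i * 0 + b' i) :=
                mul_dvd_mul (dvd_mul_right _ _) dvd_rfl
        have helt : e < (i : ℕ) + 1 := Nat.factorization_lt p (by omega)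
        have h2 : p ^ (e + 1) ∣ r := by
          refine dvd_trans (dvd_trans (pow_dvd_pow p ?_) (hMdvd p (hSPmem p pp hpt))) hrM
          have := i.isLt
          omega
        have h3 : p ^ (e + 1) ∣ (i : ℕ) + 1 := by
          have h1' : p ^ (e + 1) ∣ r + ((i : ℕ) + 1) := by simpa using h1
          exact (Nat.dvd_add_right h2).mp h1'
        exact Nat.pow_succ_factorization_not_dvd (by omega : (i : ℕ) + 1 ≠ 0) pp h3
      · -- p is one of the auxiliary primes q k
        obtain ⟨k, -, hk⟩ := (pp.prime.dvd_finset_prod_iff _).mp hpQ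
        have hpk : p = q k :=
          (Nat.prime_dvd_prime_iff_eq pp (hqprime k)).mp (pp.dvd_of_dvd_pow hk)
        obtain ⟨i, -, hpi⟩ := (pp.prime.dvd_finset_prod_iff _).mp (hpdvd 0)
        by_cases hik : i = k
        · subst hik
          apply hnq i
          have hh : q i ^ (A + 1) ∣ c i * (a' i * 0 + b' i) := by
            calc q i ^ (A + 1) = q i ^ A * q i := by rw [pow_succ]
              _ ∣ q i ^ A * (a' i * 0 + b' i) := mul_dvd_mul_left _ (hpk ▸ hpi)
              _ ∣ (((i : ℕ) + 1) * q i ^ A) * (a' i * 0 + b' i) :=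
                  mul_dvd_mul (dvd_mul_left _ _) dvd_rfl
          rw [hkey i 0] at hh
          simpa using hh
        · have hdi : p ∣ r + ((i : ℕ) + 1) := by simpa using key_dvd 0 i hpi
          have hdk : p ∣ r + ((k : ℕ) + 1) :=
            hpk ▸ (dvd_trans (dvd_pow_self (q k) hA0) (hqAr k))
          have hptlt : t < p := by
            have := hqge k
            rw [hpk]
            omega
          have hitlt := i.isLt
          have hktlt := k.isLt
          have hne : (i : ℕ) ≠ (k : ℕ) := fun h => hik (Fin.ext h)
          rcases Nat.lt_or_ge (i : ℕ) (k : ℕ) with h | h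
          · have hd := Nat.dvd_sub hdk hdi
            have heq : r + ((k : ℕ) + 1) - (r + ((i : ℕ) + 1)) = (k : ℕ) - (i : ℕ) := by omega
            rw [heq] at hd
            have := Nat.le_of_dvd (by omega) hd
            omega
          · have hd := Nat.dvd_sub hdi hdk
            have heq : r + ((i : ℕ) + 1) - (r + ((k : ℕ) + 1)) = (i : ℕ) - (k : ℕ) := by omega
            rw [heq] at hd
            have := Nat.le_of_dvd (by omega) hd
            omega
    · -- p does not divide C : p > t, pick a good residue
      have hpt : t < p := by
        by_contra hle
        push_neg at hle
        exact hpC (dvd_trans (dvd_trans (dvd_pow_self p hA0)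
          (hMdvd p (hSPmem p pp hle))) hMC)
      haveI : Fact p.Prime := ⟨pp⟩
      have hCz : (C : ZMod p) ≠ 0 := by
        rw [Ne, ZMod.natCast_eq_zero_iff]
        exact hpC
      set g : Fin t → ZMod p :=
        fun i => -((r : ZMod p) + ((i : ℕ) : ZMod p) + 1) * (C : ZMod p)⁻¹ with hgdef
      obtain ⟨x, hx⟩ : ∃ x : ZMod p, ∀ i : Fin t, x ≠ g i := by
        by_contra hcon
        push_neg at hcon
        have hsub : (Finset.univ : Finset (ZMod p)) ⊆ Finset.univ.image g := by
          intro x _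
          obtain ⟨i, hi⟩ := hcon x
          exact Finset.mem_image.mpr ⟨i, Finset.mem_univ i, hi.symm⟩
        have hcard := Finset.card_le_card hsub
        rw [Finset.card_univ, ZMod.card] at hcard
        have hcard2 := Finset.card_image_le (s := (Finset.univ : Finset (Fin t))) (f := g)
        rw [Finset.card_univ, Fintype.card_fin] at hcard2
        omega
      obtain ⟨i, -, hpi⟩ := (pp.prime.dvd_finset_prod_iff _).mp (hpdvd x.val)
      have h1 : p ∣ C * x.val + (r + ((i : ℕ) + 1)) := key_dvd x.val i hpi
      have h2 : ((C * x.val + (r + ((i : ℕ) + 1)) : ℕ) : ZMod p) = 0 :=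
        (ZMod.natCast_eq_zero_iff _ _).mpr h1
      push_cast at h2
      rw [ZMod.natCast_zmod_val x] at h2
      apply hx i
      have h3 : (C : ZMod p) * x = -((r : ZMod p) + ((i : ℕ) : ZMod p) + 1) := by
        linear_combination h2
      calc x = (C : ZMod p)⁻¹ * ((C : ZMod p) * x) := by
            rw [← mul_assoc, inv_mul_cancel₀ hCz, one_mul]
        _ = g i := by rw [h3, hgdef]; ring
  have hinf := HDickson t a' b' ha'pos hhyp
  obtain ⟨n, hnS, hnC⟩ := hinf.exists_gt (C + 1)
  refine ⟨C * n + r + 1, by omega, ?_⟩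
  intro j hj
  set i : Fin t := ⟨j, hj⟩ with hidef
  have hij : (i : ℕ) = j := rfl
  have hPp : (a' i * n + b' i).Prime := hnS i
  set P : ℕ := a' i * n + b' i with hPdef
  have hNj : C * n + r + 1 + j = c i * P := by
    have h := hkey i n
    rw [← hPdef, hij] at h
    omega
  have hcpos : 0 < c i := Nat.pos_of_ne_zero (hc0 i)
  have hciC' : c i ≤ C := Nat.le_of_dvd hCpos (hciC i)
  have hPC : C < P := by
    have h1 : n ≤ a' i * n := Nat.le_mul_of_pos_left n (ha'pos i)
    have h2 : a' i * n ≤ P := by omega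
    omega
  have hPnotc : ¬ P ∣ c i := by
    intro h
    have := Nat.le_of_dvd hcpos h
    omega
  have hP0 : P ≠ 0 := hPp.pos.ne'
  have hcoP : Nat.Coprime (c i) P :=
    ((Nat.Prime.coprime_iff_not_dvd hPp).mpr hPnotc).symm
  have hphi : phi B (c i * P) = phi B (c i) + dig B P := by
    rw [phi_mul_coprime (hc0 i) hP0 hcoP, phi_prime hPp]
  have hphic : phi B (c i) ≤ A := by
    have h1 : phi B (c i) = phi B ((i : ℕ) + 1) + phi B (q i ^ A) :=
      phi_mul_coprime (by omega) (pow_ne_zero _ (hqprime i).pos.ne') (hcoiq i)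
    have h2 : phi B ((i : ℕ) + 1) ≤ (t + 1) * (2 * dig B t) := by
      calc phi B ((i : ℕ) + 1) ≤ ((i : ℕ) + 1 + 1) * (2 * dig B ((i : ℕ) + 1)) :=
            phi_le hB1 (by omega)
        _ ≤ (t + 1) * (2 * dig B t) := by
            have hd : dig B ((i : ℕ) + 1) ≤ dig B t :=
              dig_mono_s16 hB1 (by omega) (by have := i.isLt; omega)
            exact Nat.mul_le_mul (by have := i.isLt; omega) (by omega)
    have h3 : phi B (q i ^ A) ≤ dig B Q + (m + 1) := by
      calc phi B (q i ^ A) ≤ dig B (q i) + dig B A := phi_prime_pow (hqprime i) hA0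
        _ ≤ dig B Q + (m + 1) := by
            have := dig_mono_s16 hB1 (hqprime i).pos.ne' (hqleQ i)
            omega
    omega
  have hBA : B ^ A ≤ c i := by
    calc B ^ A ≤ q i ^ A := Nat.pow_le_pow_left (by have := hqge i; omega) A
      _ ≤ ((i : ℕ) + 1) * q i ^ A := Nat.le_mul_of_pos_left _ (by omega)
  have hAlog : A ≤ Nat.log B (c i) := (Nat.le_log_iff_pow_le hB1 (hc0 i)).mpr hBA
  have hlogmul : Nat.log B (c i) + Nat.log B P ≤ Nat.log B (c i * P) := by
    refine (Nat.le_log_iff_pow_le hB1 (mul_ne_zero (hc0 i) hP0)).mpr ?_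
    rw [pow_add]
    exact Nat.mul_le_mul (Nat.pow_log_le_self B (hc0 i)) (Nat.pow_log_le_self B hP0)
  have hdigs : phi B (c i * P) ≤ dig B (c i * P) := by
    rw [hphi, dig_eq_log hB1 (mul_ne_zero (hc0 i) hP0), dig_eq_log hB1 hP0]
    omega
  show (0 : ℤ) ≤ hEcon B (C * n + r + 1 + j)
  rw [hNj]
  unfold hEcon
  have : (phi B (c i * P) : ℤ) ≤ (dig B (c i * P) : ℤ) := by exact_mod_cast hdigs
  omega
end
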